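/- Let d ≥ 1, let P, Q : ℝ^d → (0,∞) be continuously differentiable, let c > 0 be a constant, and let v : ℝ^d → ℝ^d be twice continuously differentiable such that V(x) := I + (∇vᵀ)(x) is invertible for every x ∈ ℝ^d. Define ξ(x) = P(x+v(x)) · Q(x+v(x)) · det V(x) / (c · P(x)). Let f : (0,∞) → ℝ be twice continuously differentiable with f''(ξ(x)) ≠ 0 for every x. Suppose the reduced Euler–Lagrange equation holds: for every x, the row vector ∇ₓᵀ[f'(ξ(x))] · det V(x) · (V(x)ᵀ)^{-1} is zero. Then for every x and every i ∈ {1,…,d}: 0 = ∂/∂x_i [ P(x+v(x)) Q(x+v(x)) ] · P(x) + P(x+v(x)) Q(x+v(x)) · tr( V(x)^{-1} · ∂V/∂x_i (x) ) · P(x) − P(x+v(x)) Q(x+v(x)) · ∂P/∂x_i (x). In particular this equation satisfied by v does not depend on the choice of f. -/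

import Mathlib

open Matrix

/-- Partial derivative `∂f/∂x_i` of a scalar function on `ℝ^d`. -/
noncomputable def pd {d : ℕ} (i : Fin d) (f : (Fin d → ℝ) → ℝ) (x : Fin d → ℝ) : ℝ :=
  fderiv ℝ f x (Pi.single i 1)

/-- `∇vᵀ`: the matrix whose `(i,j)` entry is `∂v_j/∂x_i`. -/
noncomputable def gradT {d : ℕ} (v : (Fin d → ℝ) → (Fin d → ℝ)) (x : Fin d → ℝ) :
    Matrix (Fin d) (Fin d) ℝ :=
  Matrix.of fun i j => pd i (fun y => v y j) x


/-- The determinant as a continuous multilinear map in the rows. -/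
noncomputable def detCMM (d : ℕ) :
    ContinuousMultilinearMap ℝ (fun _ : Fin d => (Fin d → ℝ)) ℝ :=
  MultilinearMap.mkContinuous
    ((Matrix.detRowAlternating : (Fin d → ℝ) [⋀^Fin d]→ₗ[ℝ] ℝ) :
        MultilinearMap ℝ (fun _ : Fin d => (Fin d → ℝ)) ℝ)
    (Nat.factorial d) (by
      intro m
      have hdet : (Matrix.detRowAlternating (Matrix.of m) : ℝ)
          = ∑ σ : Equiv.Perm (Fin d), Equiv.Perm.sign σ • ∏ i, m (σ i) i :=
        Matrix.det_apply (Matrix.of m)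
      show ‖(Matrix.detRowAlternating (Matrix.of m) : ℝ)‖ ≤ _
      rw [hdet]
      calc ‖∑ σ : Equiv.Perm (Fin d), Equiv.Perm.sign σ • ∏ i, m (σ i) i‖
          ≤ ∑ σ : Equiv.Perm (Fin d), ‖Equiv.Perm.sign σ • ∏ i, m (σ i) i‖ :=
            norm_sum_le _ _
        _ ≤ ∑ σ : Equiv.Perm (Fin d), ∏ i, ‖m i‖ := by
            refine Finset.sum_le_sum fun σ _ => ?_
            have h1 : ‖Equiv.Perm.sign σ • ∏ i, m (σ i) i‖ = ‖∏ i, m (σ i) i‖ := by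
              rcases Int.units_eq_one_or (Equiv.Perm.sign σ) with h | h <;>
                simp [h, Units.smul_def, norm_neg]
            rw [h1]
            have h2 : ‖∏ i, m (σ i) i‖ ≤ ∏ i, ‖m (σ i)‖ := by
              calc ‖∏ i, m (σ i) i‖ = ∏ i, ‖m (σ i) i‖ := by
                    rw [Real.norm_eq_abs, Finset.abs_prod]; rfl
                _ ≤ ∏ i, ‖m (σ i)‖ := by
                    refine Finset.prod_le_prod (fun _ _ => norm_nonneg _) fun i _ => ?_
                    exact norm_le_pi_norm (m (σ i)) i
            rw [Equiv.prod_comp σ (fun j => ‖m j‖)] at h2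
            exact h2
        _ = (Nat.factorial d : ℝ) * ∏ i, ‖m i‖ := by
            rw [Finset.sum_const, Finset.card_univ, Fintype.card_perm, Fintype.card_fin,
              nsmul_eq_mul])

lemma detCMM_apply {d : ℕ} (m : Fin d → Fin d → ℝ) :
    detCMM d m = (Matrix.of m).det := rfl

/-- Jacobi's algebraic identity at an invertible matrix. -/
lemma jacobi_sum {d : ℕ} (A H : Matrix (Fin d) (Fin d) ℝ) (hA : IsUnit A.det) :
    ∑ a, (A.updateRow a (H a)).det = A.det * (A⁻¹ * H).trace := by
  set M : Matrix (Fin d) (Fin d) ℝ := H * A⁻¹ with hM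
  have hMA : M * A = H := by
    rw [hM, Matrix.mul_assoc, Matrix.nonsing_inv_mul A hA, Matrix.mul_one]
  have hrow : ∀ a, H a = ∑ k, M a k • A k := by
    intro a
    funext b
    rw [← hMA]
    simp [Matrix.mul_apply, Finset.sum_apply]
  calc ∑ a, (A.updateRow a (H a)).det
      = ∑ a, M a a • A.det := by
        refine Finset.sum_congr rfl fun a _ => ?_
        rw [hrow a, Matrix.det_updateRow_sum]
    _ = A.det * (A⁻¹ * H).trace := by
        have htr : (A⁻¹ * H).trace = M.trace := by rw [hM, Matrix.trace_mul_comm]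
        rw [htr, Matrix.trace, Finset.mul_sum]
        refine Finset.sum_congr rfl fun a _ => ?_
        rw [smul_eq_mul, mul_comm]
        rfl

/-- Theorem 1 of the paper: invariance of the control input under the
f-divergence class.  Let `P, Q : ℝ^d → (0,∞)` be C¹, `c > 0`, `v : ℝ^d → ℝ^d` C² with
`V x = I + ∇vᵀ(x)` invertible everywhere, and
`ξ x = P(x+v x) Q(x+v x) det V(x) / (c P x)`.  Let `f` be C² on `(0,∞)` with
`f''(ξ x) ≠ 0` for all `x`.  If the reduced Euler–Lagrange equation
`∇ₓᵀ[f'(ξ x)] · det V(x) · (V(x)ᵀ)⁻¹ = 0` holds everywhere, then for every `x` and `i`,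
`0 = ∂_i[P(x+v)Q(x+v)]·P(x) + P(x+v)Q(x+v)·tr(V⁻¹ ∂V/∂x_i)·P(x) − P(x+v)Q(x+v)·∂_i P(x)`;
in particular this equation does not depend on the choice of `f`. -/
theorem stmt2 {d : ℕ} (hd : 1 ≤ d)
    (P Q : (Fin d → ℝ) → ℝ) (hP : ContDiff ℝ 1 P) (hQ : ContDiff ℝ 1 Q)
    (hPpos : ∀ x, 0 < P x) (hQpos : ∀ x, 0 < Q x)
    (c : ℝ) (hc : 0 < c)
    (v : (Fin d → ℝ) → (Fin d → ℝ)) (hv : ContDiff ℝ 2 v)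
    (V : (Fin d → ℝ) → Matrix (Fin d) (Fin d) ℝ)
    (hV : ∀ x, V x = 1 + gradT v x)
    (hinv : ∀ x, IsUnit (V x))
    (ξ : (Fin d → ℝ) → ℝ)
    (hξ : ∀ x, ξ x = P (x + v x) * Q (x + v x) * (V x).det / (c * P x))
    (f : ℝ → ℝ) (hf : ContDiffOn ℝ 2 f (Set.Ioi 0))
    (hξpos : ∀ x, ξ x ∈ Set.Ioi (0 : ℝ))
    (hf'' : ∀ x, deriv (deriv f) (ξ x) ≠ 0)
    (hEL : ∀ (x : Fin d → ℝ) (j : Fin d),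
      ∑ i : Fin d, pd i (fun y => deriv f (ξ y)) x * ((V x).det * ((V x)ᵀ)⁻¹ i j) = 0) :
    ∀ (x : Fin d → ℝ) (i : Fin d),
      0 = pd i (fun y => P (y + v y) * Q (y + v y)) x * P x
        + P (x + v x) * Q (x + v x) *
            Matrix.trace ((V x)⁻¹ * Matrix.of (fun a b => pd i (fun y => V y a b) x)) * P x
        - P (x + v x) * Q (x + v x) * pd i P x := by
  intro x i
  -- basic positivity / units
  have hdetu : IsUnit (V x).det := (Matrix.isUnit_iff_isUnit_det _).1 (hinv x)
  have hdetne : (V x).det ≠ 0 := hdetu.ne_zero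
  have hPne : P x ≠ 0 := (hPpos x).ne'
  have hcne : c ≠ 0 := hc.ne'
  have hden : c * P x ≠ 0 := mul_ne_zero hcne hPne
  -- entries of V are C¹
  have hentryC : ∀ a b : Fin d, ContDiff ℝ 1 (fun y => V y a b) := by
    intro a b
    have hvb : ContDiff ℝ 2 (fun y => v y b) :=
      (ContinuousLinearMap.proj (R := ℝ) (φ := fun _ : Fin d => ℝ) b).contDiff.comp hv
    have h1 : ContDiff ℝ 1 (fun y => fderiv ℝ (fun z => v z b) y) :=
      hvb.fderiv_right (by norm_num)
    have h2 : ContDiff ℝ 1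
        (fun y => fderiv ℝ (fun z => v z b) y (Pi.single a 1)) :=
      h1.clm_apply contDiff_const
    have heq : (fun y => V y a b)
        = fun y => (1 : Matrix (Fin d) (Fin d) ℝ) a b
            + fderiv ℝ (fun z => v z b) y (Pi.single a 1) := by
      funext y
      rw [hV y]
      rfl
    rw [heq]
    exact contDiff_const.add h2
  have hentryD : ∀ a b : Fin d, DifferentiableAt ℝ (fun y => V y a b) x :=
    fun a b => ((hentryC a b).differentiable one_ne_zero).differentiableAt
  -- rows of V
  have hrow : ∀ a : Fin d, HasFDerivAt (fun y => V y a)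
      (ContinuousLinearMap.pi fun b => fderiv ℝ (fun y => V y a b) x) x := by
    intro a
    exact hasFDerivAt_pi.2 fun b => (hentryD a b).hasFDerivAt
  -- derivative of the determinant
  set Ddet : (Fin d → ℝ) →L[ℝ] ℝ :=
    ∑ a, ((detCMM d).toContinuousLinearMap (fun j => V x j) a) ∘L
      (ContinuousLinearMap.pi fun b => fderiv ℝ (fun y => V y a b) x) with hDdet
  have hdet : HasFDerivAt (fun y => (V y).det) Ddet x := by
    exact HasFDerivAt.multilinear_comp (detCMM d) hrow
  -- the matrix H of partial derivatives of V in direction i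
  set H : Matrix (Fin d) (Fin d) ℝ :=
    Matrix.of (fun a b => pd i (fun y => V y a b) x) with hH
  set e : Fin d → ℝ := Pi.single i 1 with he
  have hDdet_e : Ddet e = (V x).det * ((V x)⁻¹ * H).trace := by
    rw [← jacobi_sum (V x) H hdetu]
    rw [hDdet]
    rw [ContinuousLinearMap.sum_apply]
    refine Finset.sum_congr rfl fun a _ => ?_
    rfl
  -- the function g
  set g : (Fin d → ℝ) → ℝ := fun y => P (y + v y) * Q (y + v y) with hg
  have hiv : DifferentiableAt ℝ (fun y => y + v y) x :=
    (differentiable_id.add (hv.differentiable (by norm_num))).differentiableAt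
  have hgd : DifferentiableAt ℝ g x := by
    exact (((hP.differentiable one_ne_zero) (x + v x)).comp x hiv).mul
      (((hQ.differentiable one_ne_zero) (x + v x)).comp x hiv)
  set G : (Fin d → ℝ) →L[ℝ] ℝ := fderiv ℝ g x with hG
  have hGf : HasFDerivAt g G x := hgd.hasFDerivAt
  -- the numerator N
  set N : (Fin d → ℝ) → ℝ := fun y => g y * (V y).det with hN
  have hNf : HasFDerivAt N (g x • Ddet + (V x).det • G) x := hGf.mul hdet
  -- the denominator
  set Pd : (Fin d → ℝ) →L[ℝ] ℝ := fderiv ℝ P x with hPd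
  have hPf : HasFDerivAt P Pd x := ((hP.differentiable one_ne_zero) x).hasFDerivAt
  have hdenf : HasFDerivAt (fun y => c * P y) (c • Pd) x := hPf.const_mul c
  have hinvf : HasFDerivAt (fun y => (c * P y)⁻¹)
      ((-((c * P x) ^ 2)⁻¹) • (c • Pd)) x :=
    (hasDerivAt_inv hden).comp_hasFDerivAt x hdenf
  -- derivative of ξ
  set Ξ : (Fin d → ℝ) →L[ℝ] ℝ :=
    N x • ((-((c * P x) ^ 2)⁻¹) • (c • Pd)) + (c * P x)⁻¹ • (g x • Ddet + (V x).det • G)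
    with hXi
  have hxieq : ξ = fun y => N y * (c * P y)⁻¹ := by
    funext y
    rw [hξ y, div_eq_mul_inv]
  have hXif : HasFDerivAt ξ Ξ x := by
    rw [hxieq]
    exact hNf.mul hinvf
  -- derivative of deriv f ∘ ξ
  have hfd : HasDerivAt (deriv f) (deriv (deriv f) (ξ x)) (ξ x) := by
    have h1 : ContDiffOn ℝ 1 (deriv f) (Set.Ioi 0) :=
      hf.deriv_of_isOpen isOpen_Ioi (by norm_num)
    have h2 : DifferentiableAt ℝ (deriv f) (ξ x) :=
      ((h1.differentiableOn (by norm_num)).differentiableAt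
        (isOpen_Ioi.mem_nhds (hξpos x)))
    exact h2.hasDerivAt
  have hFf : HasFDerivAt (fun y => deriv f (ξ y))
      (deriv (deriv f) (ξ x) • Ξ) x :=
    hfd.comp_hasFDerivAt x hXif
  -- pd of F
  have hpdF : ∀ j : Fin d, pd j (fun y => deriv f (ξ y)) x
      = deriv (deriv f) (ξ x) * Ξ (Pi.single j 1) := by
    intro j
    rw [pd, hFf.fderiv]
    rfl
  -- from the EL equation, the gradient of deriv f ∘ ξ vanishes
  set u : Fin d → ℝ := fun j => pd j (fun y => deriv f (ξ y)) x with hu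
  set B : Matrix (Fin d) (Fin d) ℝ := ((V x)ᵀ)⁻¹ with hB
  have huB : ∀ j, ∑ i', u i' * B i' j = 0 := by
    intro j
    have h0 := hEL x j
    have h1 : ∑ i', u i' * ((V x).det * B i' j)
        = (V x).det * ∑ i', u i' * B i' j := by
      rw [Finset.mul_sum]
      refine Finset.sum_congr rfl fun i' _ => ?_
      ring
    rw [h1] at h0
    exact (mul_eq_zero.1 h0).resolve_left hdetne
  have hvB : Matrix.vecMul u B = 0 := by
    funext j
    simpa [Matrix.vecMul, dotProduct] using huB j
  have hdetuT : IsUnit ((V x)ᵀ).det := by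
    rw [Matrix.det_transpose]; exact hdetu
  have hBA : B * (V x)ᵀ = 1 := Matrix.nonsing_inv_mul _ hdetuT
  have hu0 : ∀ j, u j = 0 := by
    have h2 : Matrix.vecMul u (B * (V x)ᵀ) = 0 := by
      rw [← Matrix.vecMul_vecMul, hvB, Matrix.zero_vecMul]
    rw [hBA, Matrix.vecMul_one] at h2
    intro j
    exact congrFun h2 j
  -- hence the directional derivative of ξ vanishes
  have hXie : Ξ e = 0 := by
    have h3 : deriv (deriv f) (ξ x) * Ξ (Pi.single i 1) = 0 := by
      rw [← hpdF i]
      exact hu0 i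
    have := (mul_eq_zero.1 h3).resolve_left (hf'' x)
    rw [he]
    exact this
  -- expand Ξ e
  have hGe : G e = pd i g x := rfl
  have hPde : Pd e = pd i P x := rfl
  have hXie' : N x * (-((c * P x) ^ 2)⁻¹ * (c * pd i P x))
      + (c * P x)⁻¹ * (g x * ((V x).det * ((V x)⁻¹ * H).trace) + (V x).det * pd i g x)
      = 0 := by
    have : Ξ e = N x * (-((c * P x) ^ 2)⁻¹ * (Pd e * c))
        + (c * P x)⁻¹ * (g x * Ddet e + (V x).det * G e) := by
      rw [hXi]
      simp [ContinuousLinearMap.add_apply, ContinuousLinearMap.smul_apply, smul_eq_mul]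
      ring
    rw [hDdet_e, hGe, hPde] at this
    rw [← hXie, this]
    ring
  -- clear denominators
  have hkey : c * ((V x).det *
      ((pd i g x * P x + g x * ((V x)⁻¹ * H).trace * P x) - g x * pd i P x)) = 0 := by
    have h4 := congrArg (fun t => (c * P x) ^ 2 * t) hXie'
    simp only [mul_zero] at h4
    have h5 : (c * P x) ^ 2 * (N x * (-((c * P x) ^ 2)⁻¹ * (c * pd i P x))
        + (c * P x)⁻¹ * (g x * ((V x).det * ((V x)⁻¹ * H).trace) + (V x).det * pd i g x))
        = c * ((V x).det *
          ((pd i g x * P x + g x * ((V x)⁻¹ * H).trace * P x) - g x * pd i P x)) := by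
      rw [hN]
      field_simp
      ring
    rw [h5] at h4
    exact h4
  have hfin : (pd i g x * P x + g x * ((V x)⁻¹ * H).trace * P x) - g x * pd i P x = 0 := by
    have h6 := (mul_eq_zero.1 hkey).resolve_left hcne
    exact (mul_eq_zero.1 h6).resolve_left hdetne
  have hgx : g x = P (x + v x) * Q (x + v x) := rfl
  rw [← hgx]
  linarith [hfin]
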